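/- There is an MDP that is almost-sure winning for eventually synchronizing in a target state but for which no finite-memory strategy is almost-sure winning: in the 3-state MDP with states q₀, q₁, q₂, actions a, b, where from q₀ both actions go to q₀ or q₁ with probability 1/2 each, from q₁ action a self-loops and action b goes to q₂, and from q₂ both actions go to q₀, every finite-memory strategy α satisfies sup_n M^α_n({q₂}) < 1, while some infinite-memory strategy achieves sup_n M^α_n({q₂}) = 1. -/

import Mathlib

open Finset

structure MDP (Q A : Type) [Fintype Q] [Fintype A] where
  δ : Q → A → Q → ℝ
  nonneg : ∀ q a q', 0 ≤ δ q a q'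
  sum_one : ∀ q a, ∑ q', δ q a q' = 1

structure Strat (Q A : Type) [Fintype A] where
  σ : List Q → A → ℝ
  nonneg : ∀ h a, 0 ≤ σ h a
  sum_one : ∀ h, ∑ a, σ h a = 1

variable {Q A : Type} [Fintype Q] [DecidableEq Q] [Fintype A]

/-- Probability of a path of length `n` (i.e. `n+1` states) from initial
distribution `μ0` under strategy `α`. The history passed to the strategy is
the list of visited states, most recent first. -/
noncomputable def pathProb (M : MDP Q A) (μ0 : Q → ℝ) (α : Strat Q A)
    {n : ℕ} (π : Fin (n + 1) → Q) : ℝ :=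
  μ0 (π 0) *
    ∏ i : Fin n,
      ∑ a,
        α.σ (List.ofFn (fun j : Fin (i.1 + 1) =>
            π ⟨i.1 - j.1, lt_of_le_of_lt (Nat.sub_le i.1 j.1) (Nat.lt_succ_of_lt i.isLt)⟩)) a *
          M.δ (π i.castSucc) a (π i.succ)

/-- Distribution over states after `n` steps. -/
noncomputable def Mdist (M : MDP Q A) (μ0 : Q → ℝ) (α : Strat Q A) (n : ℕ) (q : Q) : ℝ :=
  ∑ π : Fin (n + 1) → Q, if π (Fin.last n) = q then pathProb M μ0 α π else 0

/-- Probability mass in `T` after `n` steps. -/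
noncomputable def Mmass (M : MDP Q A) (μ0 : Q → ℝ) (α : Strat Q A) (n : ℕ) (T : Finset Q) : ℝ :=
  ∑ q ∈ T, Mdist M μ0 α n q

open scoped Classical in
/-- Support of the transition `δ(q,a)`. -/
noncomputable def post (M : MDP Q A) (q : Q) (a : A) : Finset Q :=
  Finset.univ.filter (fun q' => 0 < M.δ q a q')

open scoped Classical in
/-- One-step predecessor operator. -/
noncomputable def PreM (M : MDP Q A) (S : Finset Q) : Finset Q :=
  Finset.univ.filter (fun q => ∃ a, post M q a ⊆ S)

def IsDist (μ : Q → ℝ) : Prop := (∀ q, 0 ≤ μ q) ∧ ∑ q, μ q = 1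

def dirac (q0 : Q) : Q → ℝ := fun q => if q = q0 then (1 : ℝ) else 0

def PureStrat (α : Strat Q A) : Prop := ∀ h, ∃ a, α.σ h a = 1

/-- A strategy is finite-memory if it is computed by a finite transducer reading
the history of visited states. -/
def FinMem {Q A : Type} [Fintype A] (α : Strat Q A) : Prop :=
  ∃ (m : ℕ) (u : Fin (m + 1) → Q → Fin (m + 1)) (m0 : Fin (m + 1))
    (g : Fin (m + 1) → A → ℝ),
    ∀ h : List Q, α.σ h = g (h.reverse.foldl u m0)


set_option linter.unusedSectionVars false
set_option maxHeartbeats 1000000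

lemma sum_snoc {n : ℕ} (F : (Fin (n + 2) → Q) → ℝ) :
    ∑ π : Fin (n + 2) → Q, F π = ∑ π' : Fin (n + 1) → Q, ∑ x : Q, F (Fin.snoc π' x) := by
  rw [← Equiv.sum_comp (Fin.snocEquiv (fun _ => Q)) F, Fintype.sum_prod_type]
  rw [Finset.sum_comm]
  rfl

lemma pathProb_snoc (M : MDP Q A) (μ0 : Q → ℝ) (α : Strat Q A) {n : ℕ}
    (π' : Fin (n + 1) → Q) (x : Q) :
    pathProb M μ0 α (Fin.snoc π' x : Fin (n + 1 + 1) → Q) =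
      pathProb M μ0 α π' *
        ∑ a, α.σ (List.ofFn (fun j : Fin (n + 1) =>
            π' ⟨n - j.1, lt_of_le_of_lt (Nat.sub_le n j.1) (Nat.lt_succ_self n)⟩)) a *
          M.δ (π' (Fin.last n)) a x := by
  have hsn : ∀ (v : ℕ) (h : v < n + 1) (h2 : v < n + 2),
      (Fin.snoc π' x : Fin (n + 2) → Q) ⟨v, h2⟩ = π' ⟨v, h⟩ := by
    intro v h h2
    have : (⟨v, h2⟩ : Fin (n + 2)) = Fin.castSucc ⟨v, h⟩ := rfl
    rw [this, Fin.snoc_castSucc]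
  unfold pathProb
  rw [Fin.prod_univ_castSucc, mul_assoc]
  have h0 : (Fin.snoc π' x : Fin (n + 2) → Q) 0 = π' 0 := hsn 0 (by omega) (by omega)
  rw [h0]
  congr 1
  congr 1
  · apply Finset.prod_congr rfl
    intro i _
    apply Finset.sum_congr rfl
    intro a _
    have hl : (List.ofFn (fun j : Fin ((Fin.castSucc i).1 + 1) =>
        (Fin.snoc π' x : Fin (n + 2) → Q) ⟨(Fin.castSucc i).1 - j.1,
          lt_of_le_of_lt (Nat.sub_le (Fin.castSucc i).1 j.1) (Nat.lt_succ_of_lt (Fin.castSucc i).isLt)⟩)) =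
        (List.ofFn (fun j : Fin (i.1 + 1) => π' ⟨i.1 - j.1,
          lt_of_le_of_lt (Nat.sub_le i.1 j.1) (Nat.lt_succ_of_lt i.isLt)⟩)) := by
      congr 1
      funext j
      exact hsn (i.1 - j.1) (by omega) (by omega)
    rw [hl]
    congr 1
    have h1 : (Fin.snoc π' x : Fin (n + 2) → Q) (Fin.castSucc (Fin.castSucc i)) = π' (Fin.castSucc i) :=
      hsn i.1 (by omega) (by omega)
    have h2 : (Fin.snoc π' x : Fin (n + 2) → Q) ((Fin.castSucc i).succ) = π' i.succ :=
      hsn (i.1 + 1) (by omega) (by omega)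
    rw [h1, h2]
  · apply Finset.sum_congr rfl
    intro a _
    have hl : (List.ofFn (fun j : Fin ((Fin.last n).1 + 1) =>
        (Fin.snoc π' x : Fin (n + 2) → Q) ⟨(Fin.last n).1 - j.1,
          lt_of_le_of_lt (Nat.sub_le (Fin.last n).1 j.1) (Nat.lt_succ_of_lt (Fin.last n).isLt)⟩)) =
        (List.ofFn (fun j : Fin (n + 1) => π' ⟨n - j.1,
          lt_of_le_of_lt (Nat.sub_le n j.1) (Nat.lt_succ_self n)⟩)) := by
      congr 1
      funext j
      exact hsn (n - j.1) (by omega) (by omega)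
    rw [hl]
    congr 1
    have h1 : (Fin.snoc π' x : Fin (n + 2) → Q) (Fin.castSucc (Fin.last n)) = π' (Fin.last n) :=
      hsn n (by omega) (by omega)
    have h2 : (Fin.snoc π' x : Fin (n + 2) → Q) ((Fin.last n).succ) = x := by
      rw [Fin.succ_last, Fin.snoc_last]
    rw [h1, h2]

lemma Mdist_succ (M : MDP Q A) (μ0 : Q → ℝ) (α : Strat Q A) (n : ℕ) (q : Q) :
    Mdist M μ0 α (n + 1) q =
      ∑ π' : Fin (n + 1) → Q, pathProb M μ0 α π' *
        ∑ a, α.σ (List.ofFn (fun j : Fin (n + 1) =>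
            π' ⟨n - j.1, lt_of_le_of_lt (Nat.sub_le n j.1) (Nat.lt_succ_self n)⟩)) a *
          M.δ (π' (Fin.last n)) a q := by
  unfold Mdist
  rw [sum_snoc]
  apply Finset.sum_congr rfl
  intro π' _
  have : ∀ x : Q, (Fin.snoc π' x : Fin (n + 2) → Q) (Fin.last (n + 1)) = x := fun x => Fin.snoc_last ..
  calc ∑ x : Q, (if (Fin.snoc π' x : Fin (n+2) → Q) (Fin.last (n + 1)) = q then
          pathProb M μ0 α (Fin.snoc π' x) else 0)
      = ∑ x : Q, (if x = q then pathProb M μ0 α (Fin.snoc π' x : Fin (n+2) → Q) else 0) := by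
        apply Finset.sum_congr rfl; intro x _; rw [this x]
    _ = pathProb M μ0 α (Fin.snoc π' q : Fin (n+2) → Q) := by
        rw [Finset.sum_ite_eq' univ q (fun x => pathProb M μ0 α (Fin.snoc π' x : Fin (n+2) → Q))]
        simp
    _ = _ := pathProb_snoc M μ0 α π' q


-- memory sequence machinery
def memSeq {Mem : Type} (u : Mem → Q → Mem) (m0 : Mem) (π : ℕ → Q) : ℕ → Mem
  | 0 => u m0 (π 0)
  | (k+1) => u (memSeq u m0 π k) (π (k+1))

lemma memSeq_congr {Mem : Type} (u : Mem → Q → Mem) (m0 : Mem) (π π' : ℕ → Q) (k : ℕ)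
    (h : ∀ v, v ≤ k → π v = π' v) : memSeq u m0 π k = memSeq u m0 π' k := by
  induction k with
  | zero => simp [memSeq, h 0 le_rfl]
  | succ k ih =>
    simp only [memSeq]
    rw [ih (fun v hv => h v (Nat.le_succ_of_le hv)), h (k+1) le_rfl]

lemma fold_ofFn_eq_memSeq {Mem : Type} (u : Mem → Q → Mem) (m0 : Mem) (π : ℕ → Q) (i : ℕ) :
    (List.ofFn (fun j : Fin (i + 1) => π (i - j.1))).reverse.foldl u m0 = memSeq u m0 π i := by
  induction i with
  | zero => simp [memSeq]
  | succ i ih =>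
    rw [List.ofFn_succ]
    simp only [Fin.val_succ, Fin.val_zero, Nat.sub_zero]
    rw [List.reverse_cons, List.foldl_append]
    simp only [List.foldl_cons, List.foldl_nil, memSeq]
    congr 1
    rw [← ih]
    have he : (fun j : Fin (i + 1) => π (i + 1 - (j.1 + 1))) = fun j : Fin (i + 1) => π (i - j.1) := by
      funext j; congr 1; omega
    rw [he]

def extt {n : ℕ} (π : Fin (n + 1) → Q) : ℕ → Q := fun v => if h : v < n + 1 then π ⟨v, h⟩ else π 0

lemma snoc_val {n : ℕ} (π' : Fin (n + 1) → Q) (x : Q) (v : ℕ) (h : v < n + 1) (h2 : v < n + 2) :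
    (Fin.snoc π' x : Fin (n + 2) → Q) ⟨v, h2⟩ = π' ⟨v, h⟩ := by
  have : (⟨v, h2⟩ : Fin (n + 2)) = Fin.castSucc ⟨v, h⟩ := rfl
  rw [this, Fin.snoc_castSucc]

lemma extt_snoc {n : ℕ} (π' : Fin (n + 1) → Q) (x : Q) (v : ℕ) (h : v ≤ n) :
    extt (Fin.snoc π' x : Fin (n + 2) → Q) v = extt π' v := by
  unfold extt
  rw [dif_pos (by omega : v < n + 2), dif_pos (by omega : v < n + 1)]
  exact snoc_val π' x v (by omega) (by omega)

lemma hist_eq_extt {n : ℕ} (π' : Fin (n + 1) → Q) :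
    (List.ofFn (fun j : Fin (n + 1) =>
      π' ⟨n - j.1, lt_of_le_of_lt (Nat.sub_le n j.1) (Nat.lt_succ_self n)⟩)) =
    (List.ofFn (fun j : Fin (n + 1) => extt π' (n - j.1))) := by
  congr 1
  funext j
  unfold extt
  rw [dif_pos (by omega : n - j.1 < n + 1)]

noncomputable def vdist (M : MDP Q A) {N : ℕ} (u : Fin (N+1) → Q → Fin (N+1)) (m0 : Fin (N+1))
    (g : Fin (N+1) → A → ℝ) (q0 : Q) : ℕ → Q × Fin (N+1) → ℝ
  | 0 => fun s => if s = (q0, u m0 q0) then 1 else 0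
  | (n+1) => fun s' => ∑ s : Q × Fin (N+1), vdist M u m0 g q0 n s *
      ((if s'.2 = u s.2 s'.1 then (1:ℝ) else 0) * ∑ a, g s.2 a * M.δ s.1 a s'.1)

lemma vdist_eq_sum_paths (M : MDP Q A) {N : ℕ} (u : Fin (N+1) → Q → Fin (N+1)) (m0 : Fin (N+1))
    (g : Fin (N+1) → A → ℝ) (q0 : Q) (α : Strat Q A)
    (hg : ∀ h : List Q, α.σ h = g (h.reverse.foldl u m0)) :
    ∀ (n : ℕ) (q : Q) (mm : Fin (N+1)), vdist M u m0 g q0 n (q, mm) =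
      ∑ π : Fin (n+1) → Q, if (π (Fin.last n) = q ∧ memSeq u m0 (extt π) n = mm)
        then pathProb M (dirac q0) α π else 0 := by
  intro n
  induction n with
  | zero =>
    intro q mm
    rw [← Equiv.sum_comp (Equiv.funUnique (Fin 1) Q).symm]
    have hev : ∀ x : Q,
        (if ((Equiv.funUnique (Fin 1) Q).symm x (Fin.last 0) = q ∧
            memSeq u m0 (extt ((Equiv.funUnique (Fin 1) Q).symm x)) 0 = mm)
          then pathProb M (dirac q0) α ((Equiv.funUnique (Fin 1) Q).symm x) else 0)
        = (if x = q then (if (q, mm) = (q0, u m0 q0) then (1:ℝ) else 0) else 0) := by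
      intro x
      have h1 : (Equiv.funUnique (Fin 1) Q).symm x = fun _ : Fin 1 => x := rfl
      have h2 : memSeq u m0 (extt (fun _ : Fin 1 => x)) 0 = u m0 x := by
        show u m0 (extt (fun _ : Fin 1 => x) 0) = u m0 x
        unfold extt
        rw [dif_pos (by omega : (0:ℕ) < 1)]
      have h3 : pathProb M (dirac q0) α (fun _ : Fin 1 => x) = dirac q0 x := by
        unfold pathProb
        simp
      rw [h1, h2, h3]
      show (if (x = q ∧ u m0 x = mm) then dirac q0 x else 0) = _
      unfold dirac
      by_cases hxq : x = q
      · subst hxq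
        simp only [true_and, if_true, Prod.mk.injEq]
        split_ifs with h4 h5 h6 <;> simp_all <;> tauto
      · simp [hxq]
    rw [Finset.sum_congr rfl (fun x _ => hev x),
      Finset.sum_ite_eq' univ q (fun _ => if (q, mm) = (q0, u m0 q0) then (1:ℝ) else 0)]
    simp [vdist]
  | succ n ih =>
    intro q mm
    rw [sum_snoc]
    have hstep : ∀ π' : Fin (n+1) → Q,
        (∑ x : Q, if ((Fin.snoc π' x : Fin (n+2) → Q) (Fin.last (n+1)) = q ∧
            memSeq u m0 (extt (Fin.snoc π' x : Fin (n+2) → Q)) (n+1) = mm)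
          then pathProb M (dirac q0) α (Fin.snoc π' x : Fin (n+2) → Q) else 0)
        = (if u (memSeq u m0 (extt π') n) q = mm then
            pathProb M (dirac q0) α π' *
              ∑ a, g (memSeq u m0 (extt π') n) a * M.δ (π' (Fin.last n)) a q
          else 0) := by
      intro π'
      have hm : ∀ x : Q, memSeq u m0 (extt (Fin.snoc π' x : Fin (n+2) → Q)) (n+1)
          = u (memSeq u m0 (extt π') n) x := by
        intro x
        show u (memSeq u m0 (extt (Fin.snoc π' x : Fin (n+2) → Q)) n)
            (extt (Fin.snoc π' x : Fin (n+2) → Q) (n+1)) = _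
        have e1 : memSeq u m0 (extt (Fin.snoc π' x : Fin (n+2) → Q)) n
            = memSeq u m0 (extt π') n :=
          memSeq_congr _ _ _ _ _ (fun v hv => extt_snoc π' x v hv)
        have e2 : extt (Fin.snoc π' x : Fin (n+2) → Q) (n+1) = x := by
          unfold extt
          rw [dif_pos (by omega : n + 1 < n + 2)]
          exact Fin.snoc_last ..
        rw [e1, e2]
      have hlast : ∀ x : Q, (Fin.snoc π' x : Fin (n+2) → Q) (Fin.last (n+1)) = x :=
        fun x => Fin.snoc_last ..
      have hσ : α.σ (List.ofFn (fun j : Fin (n + 1) =>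
          π' ⟨n - j.1, lt_of_le_of_lt (Nat.sub_le n j.1) (Nat.lt_succ_self n)⟩))
          = g (memSeq u m0 (extt π') n) := by
        rw [hg, hist_eq_extt, fold_ofFn_eq_memSeq]
      calc ∑ x : Q, _ = ∑ x : Q, (if x = q then
            (if u (memSeq u m0 (extt π') n) q = mm then
              pathProb M (dirac q0) α π' *
                ∑ a, g (memSeq u m0 (extt π') n) a * M.δ (π' (Fin.last n)) a q
            else 0) else 0) := by
            apply Finset.sum_congr rfl
            intro x _
            rw [hlast x, hm x]
            by_cases hxq : x = q
            · subst hxq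
              simp only [true_and]
              by_cases hcond : u (memSeq u m0 (extt π') n) x = mm
              · rw [if_pos hcond, if_pos trivial, if_pos hcond,
                  pathProb_snoc M (dirac q0) α π' x]
                congr 1
                apply Finset.sum_congr rfl
                intro a _
                rw [hσ]
              · rw [if_neg hcond, if_pos trivial, if_neg hcond]
            · simp [hxq]
        _ = _ := by
            rw [Finset.sum_ite_eq' univ q]
            simp
    rw [Finset.sum_congr rfl (fun π' _ => hstep π')]
    show vdist M u m0 g q0 (n+1) (q, mm) = _
    rw [show vdist M u m0 g q0 (n+1) (q, mm) = ∑ s : Q × Fin (N+1), vdist M u m0 g q0 n s *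
      ((if mm = u s.2 q then (1:ℝ) else 0) * ∑ a, g s.2 a * M.δ s.1 a q) from rfl]
    calc ∑ s : Q × Fin (N+1), vdist M u m0 g q0 n s *
          ((if mm = u s.2 q then (1:ℝ) else 0) * ∑ a, g s.2 a * M.δ s.1 a q)
        = ∑ s : Q × Fin (N+1), ∑ π : Fin (n+1) → Q,
            (if (π (Fin.last n) = s.1 ∧ memSeq u m0 (extt π) n = s.2)
              then pathProb M (dirac q0) α π else 0) *
            ((if mm = u s.2 q then (1:ℝ) else 0) * ∑ a, g s.2 a * M.δ s.1 a q) := by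
          apply Finset.sum_congr rfl
          intro s _
          rw [ih s.1 s.2, Finset.sum_mul]
      _ = ∑ π : Fin (n+1) → Q, ∑ s : Q × Fin (N+1),
            (if s = (π (Fin.last n), memSeq u m0 (extt π) n)
              then pathProb M (dirac q0) α π *
                ((if mm = u s.2 q then (1:ℝ) else 0) * ∑ a, g s.2 a * M.δ s.1 a q) else 0) := by
          rw [Finset.sum_comm]
          apply Finset.sum_congr rfl
          intro π _
          apply Finset.sum_congr rfl
          intro s _
          rw [ite_mul, zero_mul]
          congr 1
          simp only [eq_iff_iff, Prod.ext_iff]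
          constructor
          · rintro ⟨h1, h2⟩; exact ⟨h1.symm, h2.symm⟩
          · rintro ⟨h1, h2⟩; exact ⟨h1.symm, h2.symm⟩
      _ = ∑ π : Fin (n+1) → Q,
            (if u (memSeq u m0 (extt π) n) q = mm then
              pathProb M (dirac q0) α π *
                ∑ a, g (memSeq u m0 (extt π) n) a * M.δ (π (Fin.last n)) a q
            else 0) := by
          apply Finset.sum_congr rfl
          intro π _
          rw [Finset.sum_ite_eq' univ ((π (Fin.last n), memSeq u m0 (extt π) n))]
          simp only [mem_univ, if_true]
          by_cases hc : u (memSeq u m0 (extt π) n) q = mm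
          · rw [if_pos hc, if_pos (by rw [hc] : mm = u (π (Fin.last n), memSeq u m0 (extt π) n).2 q), one_mul]
          · rw [if_neg hc, if_neg (by intro h; exact hc h.symm), zero_mul, mul_zero]
      _ = _ := rfl

lemma Mdist_eq_sum_vdist (M : MDP Q A) {N : ℕ} (u : Fin (N+1) → Q → Fin (N+1)) (m0 : Fin (N+1))
    (g : Fin (N+1) → A → ℝ) (q0 : Q) (α : Strat Q A)
    (hg : ∀ h : List Q, α.σ h = g (h.reverse.foldl u m0)) (n : ℕ) (q : Q) :
    Mdist M (dirac q0) α n q = ∑ mm : Fin (N+1), vdist M u m0 g q0 n (q, mm) := by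
  rw [Finset.sum_congr rfl (fun mm _ => vdist_eq_sum_paths M u m0 g q0 α hg n q mm)]
  rw [Finset.sum_comm]
  unfold Mdist
  apply Finset.sum_congr rfl
  intro π _
  by_cases hq : π (Fin.last n) = q
  · rw [if_pos hq]
    have : ∀ mm : Fin (N+1), (if (π (Fin.last n) = q ∧ memSeq u m0 (extt π) n = mm)
        then pathProb M (dirac q0) α π else 0)
        = (if memSeq u m0 (extt π) n = mm then pathProb M (dirac q0) α π else 0) := by
      intro mm; simp [hq]
    rw [Finset.sum_congr rfl (fun mm _ => this mm), Finset.sum_ite_eq univ _ (fun _ => pathProb M (dirac q0) α π)]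
    simp
  · rw [if_neg hq]
    symm
    apply Finset.sum_eq_zero
    intro mm _
    rw [if_neg (by tauto)]

lemma vdist_nonneg (M : MDP Q A) {N : ℕ} (u : Fin (N+1) → Q → Fin (N+1)) (m0 : Fin (N+1))
    (g : Fin (N+1) → A → ℝ) (q0 : Q) (hgn : ∀ mm a, 0 ≤ g mm a) :
    ∀ n s, 0 ≤ vdist M u m0 g q0 n s := by
  intro n
  induction n with
  | zero => intro s; unfold vdist; positivity
  | succ n ih =>
    intro s'
    show 0 ≤ ∑ s : Q × Fin (N+1), vdist M u m0 g q0 n s *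
      ((if s'.2 = u s.2 s'.1 then (1:ℝ) else 0) * ∑ a, g s.2 a * M.δ s.1 a s'.1)
    apply Finset.sum_nonneg
    intro s _
    apply mul_nonneg (ih s)
    apply mul_nonneg (by positivity)
    apply Finset.sum_nonneg
    intro a _
    exact mul_nonneg (hgn _ _) (M.nonneg _ _ _)

lemma vdist_sum_eq_one (M : MDP Q A) {N : ℕ} (u : Fin (N+1) → Q → Fin (N+1)) (m0 : Fin (N+1))
    (g : Fin (N+1) → A → ℝ) (q0 : Q) (hgs : ∀ mm, ∑ a, g mm a = 1) :
    ∀ n, ∑ s : Q × Fin (N+1), vdist M u m0 g q0 n s = 1 := by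
  intro n
  induction n with
  | zero =>
    show (∑ s : Q × Fin (N+1), if s = (q0, u m0 q0) then (1:ℝ) else 0) = 1
    rw [Finset.sum_ite_eq' univ _ (fun _ => (1:ℝ))]
    simp
  | succ n ih =>
    show (∑ s' : Q × Fin (N+1), ∑ s : Q × Fin (N+1), vdist M u m0 g q0 n s *
      ((if s'.2 = u s.2 s'.1 then (1:ℝ) else 0) * ∑ a, g s.2 a * M.δ s.1 a s'.1)) = 1
    rw [Finset.sum_comm]
    have hrow : ∀ s : Q × Fin (N+1), (∑ s' : Q × Fin (N+1),
        (if s'.2 = u s.2 s'.1 then (1:ℝ) else 0) * ∑ a, g s.2 a * M.δ s.1 a s'.1) = 1 := by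
      intro s
      have hin : ∀ q' : Q, (∑ mm' : Fin (N+1),
          (if mm' = u s.2 q' then (1:ℝ) else 0) * ∑ a, g s.2 a * M.δ s.1 a q')
          = ∑ a, g s.2 a * M.δ s.1 a q' := by
        intro q'
        rw [Finset.sum_congr rfl (fun mm' _ => by rw [ite_mul, one_mul, zero_mul]),
          Finset.sum_ite_eq' univ _ (fun _ => ∑ a, g s.2 a * M.δ s.1 a q')]
        simp
      calc (∑ s' : Q × Fin (N+1), (if s'.2 = u s.2 s'.1 then (1:ℝ) else 0) * ∑ a, g s.2 a * M.δ s.1 a s'.1)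
          = ∑ q' : Q, ∑ mm' : Fin (N+1), (if mm' = u s.2 q' then (1:ℝ) else 0) *
              ∑ a, g s.2 a * M.δ s.1 a q' := by exact Fintype.sum_prod_type _
        _ = ∑ q' : Q, ∑ a, g s.2 a * M.δ s.1 a q' := Finset.sum_congr rfl (fun q' _ => hin q')
        _ = ∑ a, ∑ q' : Q, g s.2 a * M.δ s.1 a q' := Finset.sum_comm
        _ = ∑ a, g s.2 a := Finset.sum_congr rfl (fun a _ => by rw [← Finset.mul_sum, M.sum_one, mul_one])
        _ = 1 := hgs s.2
    calc ∑ s : Q × Fin (N+1), ∑ s' : Q × Fin (N+1), vdist M u m0 g q0 n s *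
          ((if s'.2 = u s.2 s'.1 then (1:ℝ) else 0) * ∑ a, g s.2 a * M.δ s.1 a s'.1)
        = ∑ s : Q × Fin (N+1), vdist M u m0 g q0 n s * ∑ s' : Q × Fin (N+1),
          ((if s'.2 = u s.2 s'.1 then (1:ℝ) else 0) * ∑ a, g s.2 a * M.δ s.1 a s'.1) := by
          apply Finset.sum_congr rfl
          intro s _
          rw [Finset.mul_sum]
      _ = 1 := by
          rw [Finset.sum_congr rfl (fun s _ => by rw [hrow s, mul_one]), ih]

def ostep {N : ℕ} (u : Fin (N+1) → Fin 3 → Fin (N+1)) : Fin (N+1) → Fin (N+1) := fun mm => u mm 1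

noncomputable def Pstay {N : ℕ} (u : Fin (N+1) → Fin 3 → Fin (N+1)) (g : Fin (N+1) → Fin 2 → ℝ)
    (mm : Fin (N+1)) (k : ℕ) : ℝ := ∏ j ∈ Finset.range k, g ((ostep u)^[j] mm) 0

lemma orbit_period {N : ℕ} (o : Fin (N+1) → Fin (N+1)) (mm : Fin (N+1)) :
    ∃ d, 1 ≤ d ∧ d ≤ N+1 ∧ ∀ k, N+1 ≤ k → o^[k] mm = o^[k-d] mm := by
  have hcard : (univ : Finset (Fin (N+1))).card < (Finset.range (N+2)).card := by
    simp
  obtain ⟨i, hi, jj, hjj, hne, heq⟩ := Finset.exists_ne_map_eq_of_card_lt_of_maps_to hcard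
    (fun i (_ : i ∈ Finset.range (N+2)) => Finset.mem_univ (o^[i] mm))
  rw [Finset.mem_range] at hi hjj
  have hkey : ∀ (i jj : ℕ), i < jj → jj ≤ N+1 → o^[i] mm = o^[jj] mm →
      ∃ d, 1 ≤ d ∧ d ≤ N+1 ∧ ∀ k, N+1 ≤ k → o^[k] mm = o^[k-d] mm := by
    intro i jj hij hjN heq
    refine ⟨jj - i, by omega, by omega, ?_⟩
    intro k hk
    have h1 : k = (k - jj) + jj := by omega
    rw [h1, Function.iterate_add_apply, ← heq, ← Function.iterate_add_apply]
    congr 1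
    omega
  rcases Nat.lt_or_ge i jj with h | h
  · exact hkey i jj h (by omega) heq
  · exact hkey jj i (by omega) (by omega) heq.symm

section Fin3
variable (M : MDP (Fin 3) (Fin 2)) {N : ℕ} (u : Fin (N+1) → Fin 3 → Fin (N+1)) (m0 : Fin (N+1))
  (g : Fin (N+1) → Fin 2 → ℝ)
  (hδ : M.δ = fun q a q' =>
      if q = 0 then (if q' = 0 ∨ q' = 1 then (1 : ℝ) / 2 else 0)
      else if q = 1 then
        (if a = 0 then (if q' = 1 then 1 else 0) else (if q' = 2 then 1 else 0))
      else (if q' = 0 then 1 else 0))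
  (hgn : ∀ mm a, 0 ≤ g mm a) (hgs : ∀ mm, ∑ a, g mm a = 1)

local notation "vv" => vdist M u m0 g (0 : Fin 3)

lemma hg2 (hgs' : ∀ mm, ∑ a : Fin 2, g mm a = 1) : ∀ mm, g mm 0 + g mm 1 = 1 := fun mm => by
  have := hgs' mm; rwa [Fin.sum_univ_two] at this

lemma g_le_one (hgn' : ∀ mm a, 0 ≤ g mm a) (hgs' : ∀ mm, ∑ a : Fin 2, g mm a = 1) :
    ∀ mm (a : Fin 2), g mm a ≤ 1 := by
  intro mm a
  have h2 := hg2 g hgs' mm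
  have h0 := hgn' mm 0
  have h1 := hgn' mm 1
  fin_cases a
  · show g mm 0 ≤ 1
    linarith
  · show g mm 1 ≤ 1
    linarith

lemma Pstay_nonneg (hgn' : ∀ mm a, 0 ≤ g mm a) (mm : Fin (N+1)) (k : ℕ) :
    0 ≤ Pstay u g mm k :=
  Finset.prod_nonneg (fun _ _ => hgn' _ _)

lemma Pstay_le_one (hgn' : ∀ mm a, 0 ≤ g mm a) (hgs' : ∀ mm, ∑ a : Fin 2, g mm a = 1)
    (mm : Fin (N+1)) (k : ℕ) : Pstay u g mm k ≤ 1 :=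
  Finset.prod_le_one (fun _ _ => hgn' _ _) (fun _ _ => g_le_one g hgn' hgs' _ _)

lemma Pstay_anti (hgn' : ∀ mm a, 0 ≤ g mm a) (hgs' : ∀ mm, ∑ a : Fin 2, g mm a = 1)
    (mm : Fin (N+1)) {k l : ℕ} (h : k ≤ l) : Pstay u g mm l ≤ Pstay u g mm k := by
  obtain ⟨j, rfl⟩ := Nat.exists_eq_add_of_le h
  show (∏ i ∈ Finset.range (k+j), g ((ostep u)^[i] mm) 0) ≤ _
  rw [Finset.prod_range_add]
  apply mul_le_of_le_one_right (Pstay_nonneg u g hgn' mm k)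
  exact Finset.prod_le_one (fun _ _ => hgn' _ _) (fun _ _ => g_le_one g hgn' hgs' _ _)

include hδ hgn hgs

lemma hE0 : ∀ (mm : Fin (N+1)) (q : Fin 3), (∑ a : Fin 2, g mm a * M.δ 0 a q)
    = if q = 0 ∨ q = 1 then 1/2 else 0 := by
  intro mm q
  simp only [hδ, Fin.sum_univ_two]
  norm_num
  split_ifs <;> linarith [hg2 g hgs mm]

lemma hE1 : ∀ (mm : Fin (N+1)) (q : Fin 3), (∑ a : Fin 2, g mm a * M.δ 1 a q)
    = g mm 0 * (if q = 1 then 1 else 0) + g mm 1 * (if q = 2 then 1 else 0) := by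
  intro mm q
  simp only [hδ, Fin.sum_univ_two]
  norm_num

lemma hE2 : ∀ (mm : Fin (N+1)) (q : Fin 3), (∑ a : Fin 2, g mm a * M.δ 2 a q)
    = if q = 0 then 1 else 0 := by
  intro mm q
  simp only [hδ, Fin.sum_univ_two]
  simp (config := {decide := true})
  split_ifs <;> linarith [hg2 g hgs mm]

lemma vstep (n : ℕ) (q : Fin 3) (f : Fin (N+1) → ℝ) :
    ∑ mm' : Fin (N+1), vv (n+1) (q, mm') * f mm'
      = ∑ s : Fin 3 × Fin (N+1), vv n s * (∑ a, g s.2 a * M.δ s.1 a q) * f (u s.2 q) := by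
  show ∑ mm' : Fin (N+1), (∑ s : Fin 3 × Fin (N+1), vv n s *
      ((if mm' = u s.2 q then (1:ℝ) else 0) * ∑ a, g s.2 a * M.δ s.1 a q)) * f mm' = _
  calc ∑ mm' : Fin (N+1), (∑ s : Fin 3 × Fin (N+1), vv n s *
        ((if mm' = u s.2 q then (1:ℝ) else 0) * ∑ a, g s.2 a * M.δ s.1 a q)) * f mm'
      = ∑ mm' : Fin (N+1), ∑ s : Fin 3 × Fin (N+1), (vv n s *
        ((if mm' = u s.2 q then (1:ℝ) else 0) * ∑ a, g s.2 a * M.δ s.1 a q)) * f mm' := by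
        exact Finset.sum_congr rfl (fun mm' _ => Finset.sum_mul _ _ _)
    _ = ∑ s : Fin 3 × Fin (N+1), ∑ mm' : Fin (N+1), (vv n s *
        ((if mm' = u s.2 q then (1:ℝ) else 0) * ∑ a, g s.2 a * M.δ s.1 a q)) * f mm' :=
        Finset.sum_comm
    _ = _ := by
        apply Finset.sum_congr rfl
        intro s _
        have hp : ∀ mm' : Fin (N+1), (vv n s *
            ((if mm' = u s.2 q then (1:ℝ) else 0) * ∑ a, g s.2 a * M.δ s.1 a q)) * f mm'
            = if mm' = u s.2 q then (vv n s * (∑ a, g s.2 a * M.δ s.1 a q) * f mm') else 0 := by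
          intro mm'
          split_ifs with h
          · ring
          · simp
        rw [Finset.sum_congr rfl (fun mm' _ => hp mm'),
          Finset.sum_ite_eq' univ (u s.2 q) (fun mm' => vv n s * (∑ a, g s.2 a * M.δ s.1 a q) * f mm')]
        simp

lemma vrec1 (n : ℕ) (f : Fin (N+1) → ℝ) :
    ∑ mm' : Fin (N+1), vv (n+1) (1, mm') * f mm'
      = (∑ mm : Fin (N+1), vv n (0, mm) * ((1/2) * f (u mm 1)))
        + ∑ mm : Fin (N+1), vv n (1, mm) * (g mm 0 * f (u mm 1)) := by
  rw [vstep M u m0 g hδ hgn hgs n 1 f]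
  calc ∑ s : Fin 3 × Fin (N+1), vv n s * (∑ a, g s.2 a * M.δ s.1 a 1) * f (u s.2 1)
      = ∑ q₁ : Fin 3, ∑ mm : Fin (N+1), vv n (q₁, mm) * (∑ a, g mm a * M.δ q₁ a 1) * f (u mm 1) := by
        exact Fintype.sum_prod_type _
    _ = _ := by
        rw [Fin.sum_univ_three]
        have e0 : ∀ mm, (∑ a : Fin 2, g mm a * M.δ 0 a 1) = 1/2 := by
          intro mm
          rw [hE0 M g hδ hgn hgs mm 1, if_pos (Or.inr rfl)]
        have e1 : ∀ mm, (∑ a : Fin 2, g mm a * M.δ 1 a 1) = g mm 0 := by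
          intro mm
          rw [hE1 M g hδ hgn hgs mm 1, if_pos rfl, if_neg (by decide)]
          ring
        have e2 : ∀ mm, (∑ a : Fin 2, g mm a * M.δ 2 a 1) = 0 := by
          intro mm
          rw [hE2 M g hδ hgn hgs mm 1, if_neg (by decide)]
        simp only [e0, e1, e2]
        simp only [mul_zero, zero_mul, Finset.sum_const_zero, add_zero]
        congr 1
        · exact Finset.sum_congr rfl (fun mm _ => by ring)
        · exact Finset.sum_congr rfl (fun mm _ => by ring)

lemma vrec0 (n : ℕ) (f : Fin (N+1) → ℝ) :
    ∑ mm' : Fin (N+1), vv (n+1) (0, mm') * f mm'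
      = (∑ mm : Fin (N+1), vv n (0, mm) * ((1/2) * f (u mm 0)))
        + ∑ mm : Fin (N+1), vv n (2, mm) * f (u mm 0) := by
  rw [vstep M u m0 g hδ hgn hgs n 0 f]
  calc ∑ s : Fin 3 × Fin (N+1), vv n s * (∑ a, g s.2 a * M.δ s.1 a 0) * f (u s.2 0)
      = ∑ q₁ : Fin 3, ∑ mm : Fin (N+1), vv n (q₁, mm) * (∑ a, g mm a * M.δ q₁ a 0) * f (u mm 0) := by
        exact Fintype.sum_prod_type _
    _ = _ := by
        rw [Fin.sum_univ_three]
        have e0 : ∀ mm, (∑ a : Fin 2, g mm a * M.δ 0 a 0) = 1/2 := by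
          intro mm
          rw [hE0 M g hδ hgn hgs mm 0, if_pos (Or.inl rfl)]
        have e1 : ∀ mm, (∑ a : Fin 2, g mm a * M.δ 1 a 0) = 0 := by
          intro mm
          rw [hE1 M g hδ hgn hgs mm 0, if_neg (by decide), if_neg (by decide)]
          ring
        have e2 : ∀ mm, (∑ a : Fin 2, g mm a * M.δ 2 a 0) = 1 := by
          intro mm
          rw [hE2 M g hδ hgn hgs mm 0, if_pos rfl]
        simp only [e0, e1, e2]
        simp only [mul_zero, zero_mul, Finset.sum_const_zero, add_zero]
        congr 1
        · exact Finset.sum_congr rfl (fun mm _ => by ring)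
        · exact Finset.sum_congr rfl (fun mm _ => by ring)

lemma vrec2 (n : ℕ) (f : Fin (N+1) → ℝ) :
    ∑ mm' : Fin (N+1), vv (n+1) (2, mm') * f mm'
      = ∑ mm : Fin (N+1), vv n (1, mm) * (g mm 1 * f (u mm 2)) := by
  rw [vstep M u m0 g hδ hgn hgs n 2 f]
  calc ∑ s : Fin 3 × Fin (N+1), vv n s * (∑ a, g s.2 a * M.δ s.1 a 2) * f (u s.2 2)
      = ∑ q₁ : Fin 3, ∑ mm : Fin (N+1), vv n (q₁, mm) * (∑ a, g mm a * M.δ q₁ a 2) * f (u mm 2) := by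
        exact Fintype.sum_prod_type _
    _ = _ := by
        rw [Fin.sum_univ_three]
        have e0 : ∀ mm, (∑ a : Fin 2, g mm a * M.δ 0 a 2) = 0 := by
          intro mm
          rw [hE0 M g hδ hgn hgs mm 2, if_neg (by decide)]
        have e1 : ∀ mm, (∑ a : Fin 2, g mm a * M.δ 1 a 2) = g mm 1 := by
          intro mm
          rw [hE1 M g hδ hgn hgs mm 2, if_neg (by decide), if_pos rfl]
          ring
        have e2 : ∀ mm, (∑ a : Fin 2, g mm a * M.δ 2 a 2) = 0 := by
          intro mm
          rw [hE2 M g hδ hgn hgs mm 2, if_neg (by decide)]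
        simp only [e0, e1, e2]
        simp only [mul_zero, zero_mul, Finset.sum_const_zero, add_zero, zero_add]
        exact Finset.sum_congr rfl (fun mm _ => by ring)

lemma aggSum (n : ℕ) :
    (∑ mm : Fin (N+1), vv n (0, mm)) + (∑ mm : Fin (N+1), vv n (1, mm))
      + (∑ mm : Fin (N+1), vv n (2, mm)) = 1 := by
  have h := vdist_sum_eq_one M u m0 g 0 hgs n
  rw [Fintype.sum_prod_type, Fin.sum_univ_three] at h
  linarith

lemma xrec (n : ℕ) : (∑ mm : Fin (N+1), vv (n+1) (0, mm))
    = (1/2) * (∑ mm : Fin (N+1), vv n (0, mm)) + ∑ mm : Fin (N+1), vv n (2, mm) := by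
  have h := vrec0 M u m0 g hδ hgn hgs n (fun _ => 1)
  simp only [mul_one] at h
  rw [h, Finset.mul_sum]
  congr 1
  exact Finset.sum_congr rfl (fun mm _ => by ring)

lemma zrec (n : ℕ) : (∑ mm : Fin (N+1), vv (n+1) (2, mm))
    = ∑ mm : Fin (N+1), vv n (1, mm) * g mm 1 := by
  have h := vrec2 M u m0 g hδ hgn hgs n (fun _ => 1)
  simp only [mul_one] at h
  exact h

lemma xup : ∀ (t k : ℕ), (∑ mm : Fin (N+1), vv t (0, mm)) ≤ 2^k * ∑ mm : Fin (N+1), vv (t+k) (0, mm) := by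
  intro t k
  induction k with
  | zero => simp
  | succ k ih =>
    have hzn : 0 ≤ ∑ mm : Fin (N+1), vv (t+k) (2, mm) :=
      Finset.sum_nonneg (fun mm _ => vdist_nonneg M u m0 g 0 hgn (t+k) (2, mm))
    have hx := xrec M u m0 g hδ hgn hgs (t+k)
    have h1 : (∑ mm : Fin (N+1), vv (t+k) (0, mm)) ≤ 2 * ∑ mm : Fin (N+1), vv (t+k+1) (0, mm) := by
      rw [hx]; linarith
    calc (∑ mm : Fin (N+1), vv t (0, mm)) ≤ 2^k * ∑ mm : Fin (N+1), vv (t+k) (0, mm) := ih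
      _ ≤ 2^k * (2 * ∑ mm : Fin (N+1), vv (t+k+1) (0, mm)) := by
          apply mul_le_mul_of_nonneg_left h1 (by positivity)
      _ = 2^(k+1) * ∑ mm : Fin (N+1), vv (t+(k+1)) (0, mm) := by
          rw [← add_assoc]; ring

lemma zlex (n : ℕ) : (∑ mm : Fin (N+1), vv n (2, mm)) ≤ ∑ mm : Fin (N+1), vv (n+1) (0, mm) := by
  have hx := xrec M u m0 g hδ hgn hgs n
  have hxn : 0 ≤ ∑ mm : Fin (N+1), vv n (0, mm) :=
    Finset.sum_nonneg (fun mm _ => vdist_nonneg M u m0 g 0 hgn n (0, mm))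
  rw [hx]; linarith

lemma idA : ∀ (n : ℕ) (f : Fin (N+1) → ℝ), ∑ mm : Fin (N+1), vv n (1, mm) * f mm
    = ∑ t ∈ Finset.range n, (1/2) * ∑ mm : Fin (N+1), vv t (0, mm) *
        (Pstay u g (ostep u mm) (n-1-t) * f ((ostep u)^[n-1-t] (ostep u mm))) := by
  intro n
  induction n with
  | zero =>
    intro f
    rw [Finset.range_zero, Finset.sum_empty]
    apply Finset.sum_eq_zero
    intro mm _
    have : vv 0 (1, mm) = 0 := by
      show (if ((1 : Fin 3), mm) = ((0 : Fin 3), u m0 0) then (1:ℝ) else 0) = 0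
      rw [if_neg (by simp [Prod.ext_iff])]
    rw [this, zero_mul]
  | succ n ih =>
    intro f
    rw [vrec1 M u m0 g hδ hgn hgs n f]
    have h2 : (∑ mm : Fin (N+1), vv n (1, mm) * (g mm 0 * f (u mm 1)))
        = ∑ t ∈ Finset.range n, (1/2) * ∑ mm : Fin (N+1), vv t (0, mm) *
          (Pstay u g (ostep u mm) (n-t) * f ((ostep u)^[n-t] (ostep u mm))) := by
      rw [ih (fun mm => g mm 0 * f (u mm 1))]
      apply Finset.sum_congr rfl
      intro t ht
      rw [Finset.mem_range] at ht
      congr 1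
      apply Finset.sum_congr rfl
      intro mm _
      have hk : n - 1 - t + 1 = n - t := by omega
      have hps : Pstay u g (ostep u mm) (n-1-t) * g ((ostep u)^[n-1-t] (ostep u mm)) 0
          = Pstay u g (ostep u mm) (n-t) := by
        rw [← hk]
        exact (Finset.prod_range_succ _ _).symm
      have hit : u ((ostep u)^[n-1-t] (ostep u mm)) 1 = (ostep u)^[n-t] (ostep u mm) := by
        rw [← hk]
        rw [Function.iterate_succ_apply' (ostep u) (n-1-t) (ostep u mm)]
        rfl
      rw [← hps, ← hit]
      ring
    rw [h2, add_comm (∑ mm : Fin (N+1), vv n (0, mm) * ((1/2) * f (u mm 1))), Finset.sum_range_succ]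
    congr 1
    have hnn : n + 1 - 1 - n = 0 := by omega
    rw [hnn, Finset.mul_sum]
    apply Finset.sum_congr rfl
    intro mm _
    rw [show Pstay u g (ostep u mm) 0 = 1 from Finset.prod_range_zero _]
    simp only [Function.iterate_zero_apply, ostep]
    ring


lemma mainB (n : ℕ) : (∑ mm : Fin (N+1), vv n (2, mm))
    ≤ 3/4 + (2*(N+1)*(2:ℝ)^(N+1)) * ∑ mm : Fin (N+1), vv n (0, mm) := by
  have hvnn : ∀ (k : ℕ) (s : Fin 3 × Fin (N+1)), 0 ≤ vv k s := vdist_nonneg M u m0 g 0 hgn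
  have hXnn : ∀ k, 0 ≤ ∑ mm : Fin (N+1), vv k (0, mm) :=
    fun k => Finset.sum_nonneg (fun mm _ => hvnn k _)
  have hCnn : (0:ℝ) ≤ 2*(N+1)*(2:ℝ)^(N+1) := by positivity
  cases n with
  | zero =>
    have hz : (∑ mm : Fin (N+1), vv 0 (2, mm)) = 0 := by
      apply Finset.sum_eq_zero; intro mm _
      show (if ((2:Fin 3), mm) = ((0:Fin 3), u m0 0) then (1:ℝ) else 0) = 0
      rw [if_neg (by simp [Prod.ext_iff])]
    rw [hz]
    nlinarith [mul_nonneg hCnn (hXnn 0)]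
  | succ n =>
    have hz : (∑ mm : Fin (N+1), vv (n+1) (2, mm))
        = ∑ t ∈ Finset.range n, ∑ mm : Fin (N+1), (1/2) * (vv t (0, mm) *
            (Pstay u g (ostep u mm) (n-1-t) * g ((ostep u)^[n-1-t] (ostep u mm)) 1)) := by
      rw [zrec M u m0 g hδ hgn hgs n, idA M u m0 g hδ hgn hgs n (fun mm => g mm 1)]
      apply Finset.sum_congr rfl
      intro t _
      rw [Finset.mul_sum]
    have hsplit : ∀ t ∈ Finset.range n, ∀ mm : Fin (N+1),
        (1/2) * (vv t (0, mm) * (Pstay u g (ostep u mm) (n-1-t) *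
            g ((ostep u)^[n-1-t] (ostep u mm)) 1))
        ≤ (if n-1-t < N+1 then (1/2) * (vv t (0, mm) * (Pstay u g (ostep u mm) (n-1-t) *
              g ((ostep u)^[n-1-t] (ostep u mm)) 1)) else 0)
          + ((if N+1 ≤ n-1-t ∧ g ((ostep u)^[n-1-t] (ostep u mm)) 1 ≤ 3/4 then
              (3/4) * ((1/2) * (vv t (0, mm) * Pstay u g (ostep u mm) (n-1-t))) else 0)
          + (if N+1 ≤ n-1-t ∧ 3/4 < g ((ostep u)^[n-1-t] (ostep u mm)) 1 then
              (1/2) * (vv t (0, mm) * (Pstay u g (ostep u mm) (n-1-t) *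
                g ((ostep u)^[n-1-t] (ostep u mm)) 1)) else 0)) := by
      intro t _ mm
      have hv := hvnn t (0, mm)
      have hPs := Pstay_nonneg u g hgn (ostep u mm) (n-1-t)
      by_cases h1 : n-1-t < N+1
      · rw [if_pos h1, if_neg (fun hc => absurd hc.1 (by omega)),
          if_neg (fun hc => absurd hc.1 (by omega))]
        linarith
      · push_neg at h1
        by_cases h2 : g ((ostep u)^[n-1-t] (ostep u mm)) 1 ≤ 3/4
        · rw [if_neg (by omega), if_pos ⟨h1, h2⟩,
            if_neg (fun hc => absurd hc.2 (not_lt.2 h2))]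
          have hvPs : 0 ≤ vv t (0, mm) * Pstay u g (ostep u mm) (n-1-t) := mul_nonneg hv hPs
          nlinarith
        · rw [if_neg (by omega), if_neg (fun hc => h2 hc.2), if_pos ⟨h1, lt_of_not_ge h2⟩]
          linarith
    have hZsplit : (∑ mm : Fin (N+1), vv (n+1) (2, mm))
        ≤ (∑ t ∈ Finset.range n, ∑ mm : Fin (N+1),
            (if n-1-t < N+1 then (1/2) * (vv t (0, mm) * (Pstay u g (ostep u mm) (n-1-t) *
              g ((ostep u)^[n-1-t] (ostep u mm)) 1)) else 0))
          + ((∑ t ∈ Finset.range n, ∑ mm : Fin (N+1),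
            (if N+1 ≤ n-1-t ∧ g ((ostep u)^[n-1-t] (ostep u mm)) 1 ≤ 3/4 then
              (3/4) * ((1/2) * (vv t (0, mm) * Pstay u g (ostep u mm) (n-1-t))) else 0))
          + (∑ t ∈ Finset.range n, ∑ mm : Fin (N+1),
            (if N+1 ≤ n-1-t ∧ 3/4 < g ((ostep u)^[n-1-t] (ostep u mm)) 1 then
              (1/2) * (vv t (0, mm) * (Pstay u g (ostep u mm) (n-1-t) *
                g ((ostep u)^[n-1-t] (ostep u mm)) 1)) else 0))) := by
      rw [hz, ← Finset.sum_add_distrib, ← Finset.sum_add_distrib]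
      apply Finset.sum_le_sum
      intro t ht
      rw [← Finset.sum_add_distrib, ← Finset.sum_add_distrib]
      exact Finset.sum_le_sum (fun mm _ => hsplit t ht mm)
    -- bound A
    have hA : (∑ t ∈ Finset.range n, ∑ mm : Fin (N+1),
        (if n-1-t < N+1 then (1/2) * (vv t (0, mm) * (Pstay u g (ostep u mm) (n-1-t) *
          g ((ostep u)^[n-1-t] (ostep u mm)) 1)) else 0))
        ≤ ((N+1) * (2:ℝ)^(N+1)) * ∑ mm : Fin (N+1), vv (n+1) (0, mm) := by
      have hstep : ∀ t ∈ Finset.range n, (∑ mm : Fin (N+1),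
          (if n-1-t < N+1 then (1/2) * (vv t (0, mm) * (Pstay u g (ostep u mm) (n-1-t) *
            g ((ostep u)^[n-1-t] (ostep u mm)) 1)) else 0))
          ≤ (if n-1-t < N+1 then (2:ℝ)^(N+1) * ∑ mm : Fin (N+1), vv (n+1) (0, mm) else 0) := by
        intro t ht
        rw [Finset.mem_range] at ht
        by_cases hc : n-1-t < N+1
        · simp only [if_pos hc]
          have h1 : (∑ mm : Fin (N+1),
              (1/2) * (vv t (0, mm) * (Pstay u g (ostep u mm) (n-1-t) *
                g ((ostep u)^[n-1-t] (ostep u mm)) 1)))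
              ≤ (1/2) * ∑ mm : Fin (N+1), vv t (0, mm) := by
            rw [Finset.mul_sum]
            apply Finset.sum_le_sum
            intro mm _
            have hPsp : Pstay u g (ostep u mm) (n-1-t) *
                g ((ostep u)^[n-1-t] (ostep u mm)) 1 ≤ 1 :=
              mul_le_one₀ (Pstay_le_one u g hgn hgs _ _) (hgn _ _) (g_le_one g hgn hgs _ _)
            have := mul_le_of_le_one_right (hvnn t (0, mm)) hPsp
            linarith [mul_nonneg (hvnn t (0,mm)) (mul_nonneg
              (Pstay_nonneg u g hgn (ostep u mm) (n-1-t)) (hgn ((ostep u)^[n-1-t] (ostep u mm)) 1))]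
          have h2 : (∑ mm : Fin (N+1), vv t (0, mm))
              ≤ 2^(n+1-t) * ∑ mm : Fin (N+1), vv (n+1) (0, mm) := by
            have := xup M u m0 g hδ hgn hgs t (n+1-t)
            rwa [show t + (n+1-t) = n+1 from by omega] at this
          have h3 : (2:ℝ)^(n+1-t) ≤ 2^(N+2) := by
            apply pow_le_pow_right₀ one_le_two
            omega
          calc (∑ mm : Fin (N+1),
              (1/2) * (vv t (0, mm) * (Pstay u g (ostep u mm) (n-1-t) *
                g ((ostep u)^[n-1-t] (ostep u mm)) 1)))
              ≤ (1/2) * ∑ mm : Fin (N+1), vv t (0, mm) := h1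
            _ ≤ (1/2) * (2^(n+1-t) * ∑ mm : Fin (N+1), vv (n+1) (0, mm)) := by linarith
            _ ≤ (1/2) * (2^(N+2) * ∑ mm : Fin (N+1), vv (n+1) (0, mm)) := by
                have := hXnn (n+1)
                have := mul_le_mul_of_nonneg_right h3 (hXnn (n+1))
                linarith
            _ = (2:ℝ)^(N+1) * ∑ mm : Fin (N+1), vv (n+1) (0, mm) := by
                rw [show ((2:ℝ)^(N+2)) = 2 * 2^(N+1) from by ring]
                ring
        · simp only [if_neg hc, Finset.sum_const_zero, le_refl]
      calc (∑ t ∈ Finset.range n, ∑ mm : Fin (N+1),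
          (if n-1-t < N+1 then (1/2) * (vv t (0, mm) * (Pstay u g (ostep u mm) (n-1-t) *
            g ((ostep u)^[n-1-t] (ostep u mm)) 1)) else 0))
          ≤ ∑ t ∈ Finset.range n, (if n-1-t < N+1 then
              (2:ℝ)^(N+1) * ∑ mm : Fin (N+1), vv (n+1) (0, mm) else 0) :=
            Finset.sum_le_sum hstep
        _ = ((Finset.range n).filter (fun t => n-1-t < N+1)).card •
              ((2:ℝ)^(N+1) * ∑ mm : Fin (N+1), vv (n+1) (0, mm)) := by
            rw [← Finset.sum_filter, Finset.sum_const]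
        _ ≤ ((N+1) * (2:ℝ)^(N+1)) * ∑ mm : Fin (N+1), vv (n+1) (0, mm) := by
            rw [nsmul_eq_mul]
            have hcard : ((Finset.range n).filter (fun t => n-1-t < N+1)).card ≤ N+1 := by
              have hsub : (Finset.range n).filter (fun t => n-1-t < N+1)
                  ⊆ Finset.Ico (n-(N+1)) n := by
                intro t htt
                rw [Finset.mem_filter, Finset.mem_range] at htt
                rw [Finset.mem_Ico]
                omega
              calc _ ≤ (Finset.Ico (n-(N+1)) n).card := Finset.card_le_card hsub
                _ = n - (n-(N+1)) := Nat.card_Ico _ _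
                _ ≤ N+1 := by omega
            have : ((((Finset.range n).filter (fun t => n-1-t < N+1)).card : ℝ)) ≤ ((N+1 : ℕ) : ℝ) :=
              Nat.cast_le.2 hcard
            have hnn : (0:ℝ) ≤ (2:ℝ)^(N+1) * ∑ mm : Fin (N+1), vv (n+1) (0, mm) := by
              have := hXnn (n+1); positivity
            calc _ ≤ ((N+1 : ℕ) : ℝ) * ((2:ℝ)^(N+1) * ∑ mm : Fin (N+1), vv (n+1) (0, mm)) :=
                  mul_le_mul_of_nonneg_right this hnn
              _ = ((N+1) * (2:ℝ)^(N+1)) * ∑ mm : Fin (N+1), vv (n+1) (0, mm) := by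
                  push_cast
                  ring
    have hB : (∑ t ∈ Finset.range n, ∑ mm : Fin (N+1),
        (if N+1 ≤ n-1-t ∧ g ((ostep u)^[n-1-t] (ostep u mm)) 1 ≤ 3/4 then
          (3/4) * ((1/2) * (vv t (0, mm) * Pstay u g (ostep u mm) (n-1-t))) else 0)) ≤ 3/4 := by
      have hY : (∑ mm : Fin (N+1), vv n (1, mm))
          = ∑ t ∈ Finset.range n, (1/2) * ∑ mm : Fin (N+1),
              vv t (0, mm) * Pstay u g (ostep u mm) (n-1-t) := by
        have h := idA M u m0 g hδ hgn hgs n (fun _ => 1)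
        simp only [mul_one] at h
        exact h
      have hY1 : (∑ mm : Fin (N+1), vv n (1, mm)) ≤ 1 := by
        have hs := aggSum M u m0 g hδ hgn hgs n
        have h0 := hXnn n
        have h2 : 0 ≤ ∑ mm : Fin (N+1), vv n (2, mm) :=
          Finset.sum_nonneg (fun mm _ => hvnn n _)
        linarith
      calc (∑ t ∈ Finset.range n, ∑ mm : Fin (N+1),
          (if N+1 ≤ n-1-t ∧ g ((ostep u)^[n-1-t] (ostep u mm)) 1 ≤ 3/4 then
            (3/4) * ((1/2) * (vv t (0, mm) * Pstay u g (ostep u mm) (n-1-t))) else 0))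
          ≤ ∑ t ∈ Finset.range n, ∑ mm : Fin (N+1),
            (3/4) * ((1/2) * (vv t (0, mm) * Pstay u g (ostep u mm) (n-1-t))) := by
            apply Finset.sum_le_sum
            intro t _
            apply Finset.sum_le_sum
            intro mm _
            split_ifs with hcc
            · exact le_refl _
            · have h1 := hvnn t (0, mm)
              have h2 := Pstay_nonneg u g hgn (ostep u mm) (n-1-t)
              positivity
        _ = (3/4) * ∑ t ∈ Finset.range n, (1/2) * ∑ mm : Fin (N+1),
              vv t (0, mm) * Pstay u g (ostep u mm) (n-1-t) := by
            rw [Finset.mul_sum]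
            apply Finset.sum_congr rfl
            intro t _
            rw [Finset.mul_sum, Finset.mul_sum]
        _ = (3/4) * ∑ mm : Fin (N+1), vv n (1, mm) := by rw [hY]
        _ ≤ 3/4 := by linarith
    have hC : (∑ t ∈ Finset.range n, ∑ mm : Fin (N+1),
        (if N+1 ≤ n-1-t ∧ 3/4 < g ((ostep u)^[n-1-t] (ostep u mm)) 1 then
          (1/2) * (vv t (0, mm) * (Pstay u g (ostep u mm) (n-1-t) *
            g ((ostep u)^[n-1-t] (ostep u mm)) 1)) else 0))
        ≤ ((N+1) * (2:ℝ)^(N+1)) * ∑ mm : Fin (N+1), vv (n+1) (0, mm) := by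
      rw [Finset.sum_comm]
      have hper : ∀ mm : Fin (N+1), (∑ t ∈ Finset.range n,
          (if N+1 ≤ n-1-t ∧ 3/4 < g ((ostep u)^[n-1-t] (ostep u mm)) 1 then
            (1/2) * (vv t (0, mm) * (Pstay u g (ostep u mm) (n-1-t) *
              g ((ostep u)^[n-1-t] (ostep u mm)) 1)) else 0))
          ≤ (2:ℝ)^(N+1) * ∑ mm' : Fin (N+1), vv (n+1) (0, mm') := by
        intro mm
        obtain ⟨d, hd1, hd2, hrep⟩ := orbit_period (ostep u) (ostep u mm)
        by_cases hnd : d + 1 ≤ n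
        case neg =>
          have hzero : (∑ t ∈ Finset.range n,
              (if N+1 ≤ n-1-t ∧ 3/4 < g ((ostep u)^[n-1-t] (ostep u mm)) 1 then
                (1/2) * (vv t (0, mm) * (Pstay u g (ostep u mm) (n-1-t) *
                  g ((ostep u)^[n-1-t] (ostep u mm)) 1)) else 0)) = 0 := by
            apply Finset.sum_eq_zero
            intro t ht
            rw [Finset.mem_range] at ht
            rw [if_neg (fun hc => absurd hc.1 (by omega))]
          rw [hzero]
          have := hXnn (n+1)
          positivity
        have hpoint : ∀ t ∈ Finset.range n,
            (if N+1 ≤ n-1-t ∧ 3/4 < g ((ostep u)^[n-1-t] (ostep u mm)) 1 then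
              (1/2) * (vv t (0, mm) * (Pstay u g (ostep u mm) (n-1-t) *
                g ((ostep u)^[n-1-t] (ostep u mm)) 1)) else 0)
            ≤ (if t < n - d then (1/2) * (vv t (0, mm) * (Pstay u g (ostep u mm) (n-d-1-t) *
                g ((ostep u)^[n-d-1-t] (ostep u mm)) 1)) else 0) := by
          intro t ht
          rw [Finset.mem_range] at ht
          by_cases hcc : N+1 ≤ n-1-t ∧ 3/4 < g ((ostep u)^[n-1-t] (ostep u mm)) 1
          · rw [if_pos hcc, if_pos (show t < n - d by
              have := hcc.1
              omega)]
            have hkk : n-d-1-t = (n-1-t) - d := by omega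
            have heq : g ((ostep u)^[n-1-t] (ostep u mm)) 1
                = g ((ostep u)^[n-d-1-t] (ostep u mm)) 1 := by
              rw [hrep (n-1-t) hcc.1, hkk]
            have hPs : Pstay u g (ostep u mm) (n-1-t) ≤ Pstay u g (ostep u mm) (n-d-1-t) :=
              Pstay_anti u g hgn hgs _ (by omega)
            have hv := hvnn t (0, mm)
            have hp0 : 0 ≤ g ((ostep u)^[n-1-t] (ostep u mm)) 1 := hgn _ _
            rw [← heq]
            have hmul : Pstay u g (ostep u mm) (n-1-t) * g ((ostep u)^[n-1-t] (ostep u mm)) 1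
                ≤ Pstay u g (ostep u mm) (n-d-1-t) * g ((ostep u)^[n-1-t] (ostep u mm)) 1 :=
              mul_le_mul_of_nonneg_right hPs hp0
            have := mul_le_mul_of_nonneg_left hmul hv
            linarith
          · rw [if_neg hcc]
            split_ifs with h'
            · have h1 := hvnn t (0, mm)
              have h2 := Pstay_nonneg u g hgn (ostep u mm) (n-d-1-t)
              have h3 := hgn ((ostep u)^[n-d-1-t] (ostep u mm)) 1
              positivity
            · exact le_refl _
        have hshift : (∑ t ∈ Finset.range n, (if t < n - d then
              (1/2) * (vv t (0, mm) * (Pstay u g (ostep u mm) (n-d-1-t) *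
                g ((ostep u)^[n-d-1-t] (ostep u mm)) 1)) else 0))
            = ∑ t ∈ Finset.range (n-d), (1/2) * (vv t (0, mm) *
                (Pstay u g (ostep u mm) (n-d-1-t) *
                  g ((ostep u)^[n-d-1-t] (ostep u mm)) 1)) := by
          rw [← Finset.sum_filter]
          congr 1
          ext t
          simp only [Finset.mem_filter, Finset.mem_range]
          omega
        have hZd : (∑ t ∈ Finset.range (n-d), (1/2) * (vv t (0, mm) *
              (Pstay u g (ostep u mm) (n-d-1-t) *
                g ((ostep u)^[n-d-1-t] (ostep u mm)) 1)))
            ≤ ∑ mm' : Fin (N+1), vv ((n-d)+1) (2, mm') := by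
          have hzz : (∑ mm' : Fin (N+1), vv ((n-d)+1) (2, mm'))
              = ∑ t ∈ Finset.range (n-d), ∑ mm' : Fin (N+1), (1/2) * (vv t (0, mm') *
                  (Pstay u g (ostep u mm') (n-d-1-t) *
                    g ((ostep u)^[n-d-1-t] (ostep u mm')) 1)) := by
            rw [zrec M u m0 g hδ hgn hgs (n-d),
              idA M u m0 g hδ hgn hgs (n-d) (fun mm' => g mm' 1)]
            apply Finset.sum_congr rfl
            intro t _
            rw [Finset.mul_sum]
          rw [hzz]
          apply Finset.sum_le_sum
          intro t _
          apply Finset.single_le_sum (f := fun mm' => (1/2) * (vv t (0, mm') *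
              (Pstay u g (ostep u mm') (n-d-1-t) *
                g ((ostep u)^[n-d-1-t] (ostep u mm')) 1)))
            (fun mm' _ => by
              have h1 := hvnn t (0, mm')
              have h2 := Pstay_nonneg u g hgn (ostep u mm') (n-d-1-t)
              have h3 := hgn ((ostep u)^[n-d-1-t] (ostep u mm')) 1
              positivity)
            (Finset.mem_univ mm)
        have h4 : (∑ mm' : Fin (N+1), vv ((n-d)+1) (2, mm'))
            ≤ ∑ mm' : Fin (N+1), vv ((n-d)+1+1) (0, mm') :=
          zlex M u m0 g hδ hgn hgs ((n-d)+1)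
        have h5 : (∑ mm' : Fin (N+1), vv ((n-d)+1+1) (0, mm'))
            ≤ 2^((n+1)-((n-d)+2)) * ∑ mm' : Fin (N+1), vv (n+1) (0, mm') := by
          have := xup M u m0 g hδ hgn hgs ((n-d)+2) ((n+1)-((n-d)+2))
          rwa [show (n-d)+2 + ((n+1)-((n-d)+2)) = n+1 from by omega] at this
        have h6 : (2:ℝ)^((n+1)-((n-d)+2)) ≤ 2^(N+1) := by
          apply pow_le_pow_right₀ one_le_two
          omega
        calc (∑ t ∈ Finset.range n,
            (if N+1 ≤ n-1-t ∧ 3/4 < g ((ostep u)^[n-1-t] (ostep u mm)) 1 then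
              (1/2) * (vv t (0, mm) * (Pstay u g (ostep u mm) (n-1-t) *
                g ((ostep u)^[n-1-t] (ostep u mm)) 1)) else 0))
            ≤ ∑ t ∈ Finset.range n, (if t < n - d then
                (1/2) * (vv t (0, mm) * (Pstay u g (ostep u mm) (n-d-1-t) *
                  g ((ostep u)^[n-d-1-t] (ostep u mm)) 1)) else 0) :=
              Finset.sum_le_sum hpoint
          _ = ∑ t ∈ Finset.range (n-d), (1/2) * (vv t (0, mm) *
                (Pstay u g (ostep u mm) (n-d-1-t) *
                  g ((ostep u)^[n-d-1-t] (ostep u mm)) 1)) := hshift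
          _ ≤ ∑ mm' : Fin (N+1), vv ((n-d)+1) (2, mm') := hZd
          _ ≤ ∑ mm' : Fin (N+1), vv ((n-d)+1+1) (0, mm') := h4
          _ ≤ 2^((n+1)-((n-d)+2)) * ∑ mm' : Fin (N+1), vv (n+1) (0, mm') := h5
          _ ≤ (2:ℝ)^(N+1) * ∑ mm' : Fin (N+1), vv (n+1) (0, mm') :=
              mul_le_mul_of_nonneg_right h6 (hXnn (n+1))
      calc (∑ mm : Fin (N+1), ∑ t ∈ Finset.range n,
          (if N+1 ≤ n-1-t ∧ 3/4 < g ((ostep u)^[n-1-t] (ostep u mm)) 1 then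
            (1/2) * (vv t (0, mm) * (Pstay u g (ostep u mm) (n-1-t) *
              g ((ostep u)^[n-1-t] (ostep u mm)) 1)) else 0))
          ≤ ∑ _mm : Fin (N+1), (2:ℝ)^(N+1) * ∑ mm' : Fin (N+1), vv (n+1) (0, mm') :=
            Finset.sum_le_sum (fun mm _ => hper mm)
        _ = ((N+1) * (2:ℝ)^(N+1)) * ∑ mm : Fin (N+1), vv (n+1) (0, mm) := by
            rw [Finset.sum_const, Finset.card_univ, Fintype.card_fin, nsmul_eq_mul]
            push_cast
            ring
    calc (∑ mm : Fin (N+1), vv (n+1) (2, mm)) ≤ _ := hZsplit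
      _ ≤ ((N+1) * (2:ℝ)^(N+1)) * (∑ mm : Fin (N+1), vv (n+1) (0, mm))
          + (3/4 + ((N+1) * (2:ℝ)^(N+1)) * ∑ mm : Fin (N+1), vv (n+1) (0, mm)) :=
          add_le_add hA (add_le_add hB hC)
      _ = 3/4 + (2*(N+1)*(2:ℝ)^(N+1)) * ∑ mm : Fin (N+1), vv (n+1) (0, mm) := by ring
end Fin3

lemma Mdist_zero (M : MDP Q A) (μ0 : Q → ℝ) (α : Strat Q A) (q : Q) :
    Mdist M μ0 α 0 q = μ0 q := by
  unfold Mdist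
  rw [← Equiv.sum_comp (Equiv.funUnique (Fin 1) Q).symm]
  have : ∀ x : Q, ((if ((Equiv.funUnique (Fin 1) Q).symm x) (Fin.last 0) = q
      then pathProb M μ0 α ((Equiv.funUnique (Fin 1) Q).symm x) else 0))
      = (if x = q then μ0 x else 0) := by
    intro x
    have h1 : (Equiv.funUnique (Fin 1) Q).symm x = fun _ : Fin 1 => x := rfl
    rw [h1]
    have h3 : pathProb M μ0 α (fun _ : Fin 1 => x) = μ0 x := by
      unfold pathProb; simp
    rw [h3]
  rw [Finset.sum_congr rfl (fun x _ => this x), Finset.sum_ite_eq' univ q μ0]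
  simp

open scoped Classical in
noncomputable def actB : ℕ → Fin 2 := fun ℓ => if (∃ j : ℕ, ℓ + 1 = 2^j) then 1 else 0

noncomputable def tStrat (act : ℕ → Fin 2) : Strat (Fin 3) (Fin 2) where
  σ := fun h a => if a = act h.length then 1 else 0
  nonneg := by
    intro h a
    show (0:ℝ) ≤ if a = act h.length then 1 else 0
    split_ifs <;> norm_num
  sum_one := by
    intro h
    show (∑ a : Fin 2, if a = act h.length then (1:ℝ) else 0) = 1
    rw [Finset.sum_ite_eq' univ (act h.length) (fun _ => (1:ℝ))]
    simp

noncomputable def wseq (M : MDP (Fin 3) (Fin 2)) (act : ℕ → Fin 2) : ℕ → Fin 3 → ℝ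
  | 0 => dirac 0
  | (n+1) => fun q' => ∑ q, wseq M act n q * M.δ q (act (n+1)) q'

lemma wseq_bridge (M : MDP (Fin 3) (Fin 2)) (act : ℕ → Fin 2) :
    ∀ n q, Mdist M (dirac 0) (tStrat act) n q = wseq M act n q := by
  intro n
  induction n with
  | zero => intro q; rw [Mdist_zero]; rfl
  | succ n ih =>
    intro q
    rw [Mdist_succ]
    have hstep : ∀ π' : Fin (n+1) → Fin 3,
        (∑ a, (tStrat act).σ (List.ofFn (fun j : Fin (n + 1) =>
            π' ⟨n - j.1, lt_of_le_of_lt (Nat.sub_le n j.1) (Nat.lt_succ_self n)⟩)) a *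
          M.δ (π' (Fin.last n)) a q) = M.δ (π' (Fin.last n)) (act (n+1)) q := by
      intro π'
      have hσ : ∀ a, (tStrat act).σ (List.ofFn (fun j : Fin (n + 1) =>
          π' ⟨n - j.1, lt_of_le_of_lt (Nat.sub_le n j.1) (Nat.lt_succ_self n)⟩)) a
          = if a = act (n+1) then 1 else 0 := by
        intro a
        show (if a = act (List.ofFn _).length then (1:ℝ) else 0) = _
        rw [List.length_ofFn]
      rw [Finset.sum_congr rfl (fun a _ => by
        rw [hσ a, ite_mul, one_mul, zero_mul])]
      rw [Finset.sum_ite_eq' univ (act (n+1)) (fun a => M.δ (π' (Fin.last n)) a q)]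
      simp
    rw [Finset.sum_congr rfl (fun π' _ => by rw [hstep π'])]
    show _ = ∑ q₁, wseq M act n q₁ * M.δ q₁ (act (n+1)) q
    calc ∑ π' : Fin (n+1) → Fin 3, pathProb M (dirac 0) (tStrat act) π' * M.δ (π' (Fin.last n)) (act (n+1)) q
        = ∑ π' : Fin (n+1) → Fin 3, ∑ q₁, (if π' (Fin.last n) = q₁
            then pathProb M (dirac 0) (tStrat act) π' else 0) * M.δ q₁ (act (n+1)) q := by
          apply Finset.sum_congr rfl
          intro π' _
          rw [Finset.sum_congr rfl (fun q₁ _ => by rw [ite_mul, zero_mul]),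
            Finset.sum_ite_eq univ (π' (Fin.last n))
              (fun q₁ => pathProb M (dirac 0) (tStrat act) π' * M.δ q₁ (act (n+1)) q)]
          simp
      _ = ∑ q₁, (∑ π' : Fin (n+1) → Fin 3, (if π' (Fin.last n) = q₁
            then pathProb M (dirac 0) (tStrat act) π' else 0)) * M.δ q₁ (act (n+1)) q := by
          rw [Finset.sum_comm]
          apply Finset.sum_congr rfl
          intro q₁ _
          rw [Finset.sum_mul]
      _ = ∑ q₁, wseq M act n q₁ * M.δ q₁ (act (n+1)) q := by
          apply Finset.sum_congr rfl
          intro q₁ _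
          rw [← ih q₁]
          rfl

lemma wseq_nonneg (M : MDP (Fin 3) (Fin 2)) (act : ℕ → Fin 2) :
    ∀ n q, 0 ≤ wseq M act n q := by
  intro n
  induction n with
  | zero =>
    intro q
    show (0:ℝ) ≤ if q = 0 then 1 else 0
    split_ifs <;> norm_num
  | succ n ih =>
    intro q
    show (0:ℝ) ≤ ∑ q₁, wseq M act n q₁ * M.δ q₁ (act (n+1)) q
    exact Finset.sum_nonneg (fun q₁ _ => mul_nonneg (ih q₁) (M.nonneg _ _ _))

lemma wseq_sum (M : MDP (Fin 3) (Fin 2)) (act : ℕ → Fin 2) :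
    ∀ n, ∑ q, wseq M act n q = 1 := by
  intro n
  induction n with
  | zero =>
    show (∑ q : Fin 3, if q = 0 then (1:ℝ) else 0) = 1
    rw [Finset.sum_ite_eq' univ (0 : Fin 3) (fun _ => (1:ℝ))]
    simp
  | succ n ih =>
    show (∑ q' : Fin 3, ∑ q, wseq M act n q * M.δ q (act (n+1)) q') = 1
    rw [Finset.sum_comm]
    calc (∑ q : Fin 3, ∑ q' : Fin 3, wseq M act n q * M.δ q (act (n+1)) q')
        = ∑ q : Fin 3, wseq M act n q := by
          apply Finset.sum_congr rfl
          intro q _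
          rw [← Finset.mul_sum, M.sum_one, mul_one]
      _ = 1 := ih

section Part2
variable (M : MDP (Fin 3) (Fin 2)) (act : ℕ → Fin 2)
  (hδ : M.δ = fun q a q' =>
      if q = 0 then (if q' = 0 ∨ q' = 1 then (1 : ℝ) / 2 else 0)
      else if q = 1 then
        (if a = 0 then (if q' = 1 then 1 else 0) else (if q' = 2 then 1 else 0))
      else (if q' = 0 then 1 else 0))
include hδ

lemma w0rec (n : ℕ) : wseq M act (n+1) 0 = (1/2) * wseq M act n 0 + wseq M act n 2 := by
  show (∑ q, wseq M act n q * M.δ q (act (n+1)) 0) = _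
  rw [Fin.sum_univ_three]
  simp only [hδ]
  simp (config := {decide := true})
  ring

lemma w2rec_a (n : ℕ) (h : act (n+1) = 0) : wseq M act (n+1) 2 = 0 := by
  show (∑ q, wseq M act n q * M.δ q (act (n+1)) 2) = 0
  rw [Fin.sum_univ_three, h]
  simp only [hδ]
  norm_num [Fin.ext_iff]

lemma w2rec_b (n : ℕ) (h : act (n+1) = 1) : wseq M act (n+1) 2 = wseq M act n 1 := by
  show (∑ q, wseq M act n q * M.δ q (act (n+1)) 2) = _
  rw [Fin.sum_univ_three, h]
  simp only [hδ]
  norm_num [Fin.ext_iff]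

lemma runA (s k : ℕ) (hk : 1 ≤ k) (hall : ∀ t, s ≤ t → t < s + k → act (t+1) = 0) :
    wseq M act (s+k) 0 ≤ (1/2:ℝ)^(k-1) ∧ wseq M act (s+k) 2 = 0 := by
  induction k, hk using Nat.le_induction with
  | base =>
    have ha : act (s+1) = 0 := hall s le_rfl (by omega)
    constructor
    · rw [w0rec M act hδ s]
      have hsum := wseq_sum M act s
      rw [Fin.sum_univ_three] at hsum
      have h0 := wseq_nonneg M act s 0
      have h1 := wseq_nonneg M act s 1
      have h2 := wseq_nonneg M act s 2
      norm_num
      linarith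
    · exact w2rec_a M act hδ s ha
  | succ k hk1 ih =>
    have ih' := ih (fun t h1 h2 => hall t h1 (by omega))
    have ha : act (s+k+1) = 0 := hall (s+k) (by omega) (by omega)
    have hrw : s + (k+1) = (s+k) + 1 := rfl
    constructor
    · rw [hrw, w0rec M act hδ (s+k), ih'.2]
      have hle := ih'.1
      have hps : ((1:ℝ)/2)^k = (1/2)^(k-1) * (1/2) := by
        rw [← pow_succ]
        congr 1
        omega
      rw [show (k+1)-1 = k from by omega, hps]
      linarith
    · rw [hrw]
      exact w2rec_a M act hδ (s+k) ha
end Part2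

lemma actB_zero {ℓ j : ℕ} (h1 : 2^j < ℓ+1) (h2 : ℓ+1 < 2^(j+1)) : actB ℓ = 0 := by
  unfold actB
  rw [if_neg]
  rintro ⟨i, hi⟩
  rcases le_or_gt i j with h | h
  · have : (2:ℕ)^i ≤ 2^j := Nat.pow_le_pow_right (by norm_num) h
    omega
  · have : (2:ℕ)^(j+1) ≤ 2^i := Nat.pow_le_pow_right (by norm_num) h
    omega

lemma actB_one (j : ℕ) : actB (2^j - 1) = 1 := by
  unfold actB
  rw [if_pos ⟨j, by have := Nat.two_pow_pos j; omega⟩]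

lemma part2final (M : MDP (Fin 3) (Fin 2))
    (hδ : M.δ = fun q a q' =>
      if q = 0 then (if q' = 0 ∨ q' = 1 then (1 : ℝ) / 2 else 0)
      else if q = 1 then
        (if a = 0 then (if q' = 1 then 1 else 0) else (if q' = 2 then 1 else 0))
      else (if q' = 0 then 1 else 0)) :
    ∀ ε : ℝ, 0 < ε → ∃ n, 1 - ε ≤ Mmass M (dirac 0) (tStrat actB) n {2} := by
  intro ε hε
  obtain ⟨m₀, hm₀⟩ := exists_pow_lt_of_lt_one hε (by norm_num : (1/2:ℝ) < 1)
  set j := m₀ + 2 with hj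
  have hPbig : m₀ + 2 ≤ 2^j := le_of_lt (Nat.lt_two_pow_self)
  have hpow2 : (2:ℕ)^(j+1) = 2 * 2^j := by rw [pow_succ]; ring
  set s := 2^j - 1 with hs
  set k := 2^j - 1 with hkdef
  have hk1 : 1 ≤ k := by omega
  have hall : ∀ t, s ≤ t → t < s + k → actB (t+1) = 0 := by
    intro t h1 h2
    exact actB_zero (j := j) (by omega) (by omega)
  obtain ⟨hX, hZ⟩ := runA M actB hδ s k hk1 hall
  have hsum := wseq_sum M actB (s+k)
  rw [Fin.sum_univ_three] at hsum
  have h1nn := wseq_nonneg M actB (s+k) 1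
  have hY : 1 - (1/2:ℝ)^(k-1) ≤ wseq M actB (s+k) 1 := by
    have h0 := wseq_nonneg M actB (s+k) 0
    linarith
  have hb : actB ((s+k)+1) = 1 := by
    have he : (s+k)+1 = 2^(j+1) - 1 := by omega
    rw [he]
    exact actB_one (j+1)
  have hfin : wseq M actB ((s+k)+1) 2 = wseq M actB (s+k) 1 := w2rec_b M actB hδ (s+k) hb
  refine ⟨(s+k)+1, ?_⟩
  have hmm : Mmass M (dirac 0) (tStrat actB) ((s+k)+1) {2}
      = wseq M actB ((s+k)+1) 2 := by
    show ∑ q ∈ ({2} : Finset (Fin 3)), Mdist M (dirac 0) (tStrat actB) ((s+k)+1) q = _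
    rw [Finset.sum_singleton, wseq_bridge]
  rw [hmm, hfin]
  have hpow : (1/2:ℝ)^(k-1) ≤ (1/2:ℝ)^m₀ :=
    pow_le_pow_of_le_one (by norm_num) (by norm_num) (by omega)
  linarith

/-- In the 3-state MDP with `δ(q₀,·) = ½q₀ + ½q₁`, `δ(q₁,a) = q₁`, `δ(q₁,b) = q₂`,
`δ(q₂,·) = q₀`, started at `q₀`: every finite-memory strategy has
`sup_n M^α_n({q₂}) < 1`, while some (infinite-memory) strategy achieves
`sup_n M^α_n({q₂}) = 1`. Hence almost-sure eventually synchronizing strategies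
require infinite memory. -/
theorem infinite_memory_needed_for_almost_sure
    (M : MDP (Fin 3) (Fin 2))
    (hδ : M.δ = fun q a q' =>
      if q = 0 then (if q' = 0 ∨ q' = 1 then (1 : ℝ) / 2 else 0)
      else if q = 1 then
        (if a = 0 then (if q' = 1 then 1 else 0) else (if q' = 2 then 1 else 0))
      else (if q' = 0 then 1 else 0)) :
    (∀ α : Strat (Fin 3) (Fin 2), FinMem α →
      ∃ c : ℝ, c < 1 ∧ ∀ n : ℕ, Mmass M (dirac 0) α n {2} ≤ c) ∧
    (∃ α : Strat (Fin 3) (Fin 2), ∀ ε : ℝ, 0 < ε →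
      ∃ n : ℕ, 1 - ε ≤ Mmass M (dirac 0) α n {2}) := by
  classical
  constructor
  · intro α hFM
    obtain ⟨N, u, m0, g0, hg0⟩ := hFM
    set g : Fin (N+1) → Fin 2 → ℝ := fun mm =>
      if (∀ a, 0 ≤ g0 mm a) ∧ (∑ a, g0 mm a) = 1 then g0 mm
      else fun a => if a = 0 then 1 else 0 with hgdef
    have hg : ∀ h : List (Fin 3), α.σ h = g (h.reverse.foldl u m0) := by
      intro h
      have hcond : (∀ a, 0 ≤ g0 (h.reverse.foldl u m0) a)
          ∧ (∑ a, g0 (h.reverse.foldl u m0) a) = 1 := by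
        constructor
        · intro a
          have := α.nonneg h a
          rwa [hg0 h] at this
        · have := α.sum_one h
          rw [Finset.sum_congr rfl (fun a _ => by rw [hg0 h])] at this
          exact this
      rw [hg0 h, hgdef]
      simp only []
      rw [if_pos hcond]
    have hgn : ∀ mm a, 0 ≤ g mm a := by
      intro mm a
      rw [hgdef]
      simp only []
      split_ifs with h
      · exact h.1 a
      · show (0:ℝ) ≤ if a = 0 then 1 else 0
        split_ifs <;> norm_num
    have hgs : ∀ mm, ∑ a, g mm a = 1 := by
      intro mm
      rw [hgdef]
      simp only []
      split_ifs with h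
      · exact h.2
      · show (∑ a : Fin 2, if a = 0 then (1:ℝ) else 0) = 1
        rw [Finset.sum_ite_eq' univ (0 : Fin 2) (fun _ => (1:ℝ))]
        simp
    have hCnn : (0:ℝ) ≤ 2*(N+1)*(2:ℝ)^(N+1) := by positivity
    refine ⟨(3/4 + (2*(N+1)*(2:ℝ)^(N+1))) / (1 + (2*(N+1)*(2:ℝ)^(N+1))), ?_, ?_⟩
    · rw [div_lt_one (by linarith)]
      linarith
    · intro n
      have hmdist : Mmass M (dirac 0) α n {2} = ∑ mm : Fin (N+1), vdist M u m0 g 0 n (2, mm) := by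
        show ∑ q ∈ ({2} : Finset (Fin 3)), Mdist M (dirac 0) α n q = _
        rw [Finset.sum_singleton, Mdist_eq_sum_vdist M u m0 g 0 α hg n 2]
      have hzb := mainB M u m0 g hδ hgn hgs n
      have hy : 0 ≤ ∑ mm : Fin (N+1), vdist M u m0 g 0 n (1, mm) :=
        Finset.sum_nonneg (fun mm _ => vdist_nonneg M u m0 g 0 hgn n (1, mm))
      have hs := aggSum M u m0 g hδ hgn hgs n
      have hxz : (∑ mm : Fin (N+1), vdist M u m0 g 0 n (0, mm))
          ≤ 1 - ∑ mm : Fin (N+1), vdist M u m0 g 0 n (2, mm) := by linarith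
      rw [hmdist]
      rw [le_div_iff₀ (by linarith)]
      have hmul := mul_le_mul_of_nonneg_left hxz hCnn
      nlinarith [hzb, hmul]
  · exact ⟨tStrat actB, part2final M hδ⟩
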